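/- Let k, R > 0, let n, m be integers, and let h : ℝ → ℝ be continuous and 2π-periodic. For real δ with |δ| · sup_θ |h(θ)| < R define G(δ) := ∫₀^{2π} ∫₀^{R+δh(θ)} J_n(kr)·J_m(kr)·e^{i(n−m)θ} · r dr dθ. Then there exist constants C > 0 and δ₀ > 0 such that for all real δ with |δ| ≤ δ₀, |G(δ) − G(0) − 2π R δ · J_n(kR)·J_m(kR)·𝔉[h](n−m)| ≤ C·δ². -/

import Mathlib

open Real

/-- Bessel function of the first kind of nonnegative integer order `n`. -/
noncomputable def besselJnat (n : ℕ) (x : ℝ) : ℝ :=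
  ∑' j : ℕ, ((-1 : ℝ) ^ j / (Nat.factorial j * Nat.factorial (j + n))) * (x / 2) ^ (2 * j + n)

/-- Bessel function of the first kind of integer order: `J_{-n} = (-1)^n J_n`. -/
noncomputable def besselJ (n : ℤ) (x : ℝ) : ℝ :=
  if 0 ≤ n then besselJnat n.toNat x else (-1 : ℝ) ^ n.natAbs * besselJnat n.natAbs x

lemma abs_pow_sub_pow_le' {M : ℝ} (hM : 1 ≤ M) {a b : ℝ} (ha : |a| ≤ M) (hb : |b| ≤ M) :
    ∀ p : ℕ, |a ^ p - b ^ p| ≤ p * M ^ p * |a - b| := by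
  have hM0 : (0:ℝ) ≤ M := le_trans zero_le_one hM
  intro p
  induction p with
  | zero => simp
  | succ p ih =>
    have key : a ^ (p+1) - b ^ (p+1) = a * (a ^ p - b ^ p) + (a - b) * b ^ p := by ring
    have h1 : |a ^ (p+1) - b ^ (p+1)| ≤ |a| * |a ^ p - b ^ p| + |a - b| * |b| ^ p := by
      rw [key]
      refine le_trans (abs_add_le _ _) ?_
      rw [abs_mul, abs_mul, abs_pow]
    have h2 : |a| * |a ^ p - b ^ p| ≤ M * (p * M ^ p * |a - b|) :=
      mul_le_mul ha ih (abs_nonneg _) hM0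
    have h3 : |b| ^ p ≤ M ^ p := pow_le_pow_left₀ (abs_nonneg _) hb p
    have h4 : M ^ p ≤ M ^ (p+1) := pow_le_pow_right₀ hM (Nat.le_succ p)
    have h5 : |a - b| * |b| ^ p ≤ |a - b| * M ^ (p+1) :=
      mul_le_mul_of_nonneg_left (le_trans h3 h4) (abs_nonneg _)
    have h6 : M * (p * M ^ p * |a - b|) ≤ p * M ^ (p+1) * |a - b| := by
      have : M * (p * M ^ p * |a - b|) = p * (M * M ^ p) * |a - b| := by ring
      rw [this, ← pow_succ']
    push_cast
    calc |a ^ (p+1) - b ^ (p+1)| ≤ |a| * |a ^ p - b ^ p| + |a - b| * |b| ^ p := h1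
      _ ≤ M * (p * M ^ p * |a - b|) + |a - b| * M ^ (p+1) := add_le_add h2 h5
      _ ≤ (p:ℝ) * M ^ (p+1) * |a - b| + |a - b| * M ^ (p+1) := by
          push_cast at h6 ⊢; linarith
      _ = ((p:ℝ) + 1) * M ^ (p+1) * |a - b| := by ring

lemma summable_bessel_aux (n : ℕ) (M : ℝ) (hM : 1 ≤ M) :
    Summable (fun j : ℕ =>
      ((2*j+n : ℕ) : ℝ) * M ^ (2*j+n) / (Nat.factorial j * Nat.factorial (j+n))) := by
  have hM0 : (0:ℝ) < M := lt_of_lt_of_le zero_lt_one hM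
  refine Summable.of_nonneg_of_le (fun j => by positivity) (fun j => ?_)
    (((Real.summable_pow_div_factorial (2*M^2)).mul_left (((n:ℝ)+2) * M ^ n)))
  have hfac1 : (1:ℝ) ≤ (Nat.factorial (j+n) : ℝ) := by
    exact_mod_cast Nat.one_le_iff_ne_zero.mpr (Nat.factorial_ne_zero _)
  have hfacj : (0:ℝ) < (Nat.factorial j : ℝ) := by exact_mod_cast Nat.factorial_pos j
  have hcoef : ((2*j+n : ℕ) : ℝ) ≤ ((n:ℝ)+2) * 2 ^ j := by
    have hnat : (2*j+n : ℕ) ≤ (n+2) * 2 ^ j := by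
      have h2j : j + 1 ≤ 2 ^ j := Nat.lt_two_pow_self
      nlinarith
    calc ((2*j+n : ℕ) : ℝ) ≤ (((n+2) * 2 ^ j : ℕ) : ℝ) := by exact_mod_cast hnat
      _ = ((n:ℝ)+2) * 2 ^ j := by push_cast; ring
  calc ((2*j+n : ℕ) : ℝ) * M ^ (2*j+n) / (Nat.factorial j * Nat.factorial (j+n))
      = ((2*j+n : ℕ) : ℝ) * ((M^2) ^ j * M ^ n) / (Nat.factorial j * Nat.factorial (j+n)) := by
        rw [pow_add, pow_mul]
    _ ≤ (((n:ℝ)+2) * 2 ^ j) * ((M^2) ^ j * M ^ n) / (Nat.factorial j * 1) := by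
        gcongr
    _ = ((n:ℝ)+2) * M ^ n * ((2*M^2) ^ j / Nat.factorial j) := by
        rw [mul_pow]; ring

lemma besselJnat_term_summable (n : ℕ) (x : ℝ) :
    Summable (fun j : ℕ =>
      ((-1 : ℝ) ^ j / (Nat.factorial j * Nat.factorial (j + n))) * (x / 2) ^ (2 * j + n)) := by
  set y : ℝ := max |x/2| 1 with hy
  have hy1 : (1:ℝ) ≤ y := le_max_right _ _
  have hy0 : (0:ℝ) < y := lt_of_lt_of_le zero_lt_one hy1
  have hxy : |x/2| ≤ y := le_max_left _ _
  apply Summable.of_abs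
  refine Summable.of_nonneg_of_le (fun j => abs_nonneg _) (fun j => ?_)
    ((Real.summable_pow_div_factorial (y^2)).mul_left (y ^ n))
  have hfac1 : (1:ℝ) ≤ (Nat.factorial (j+n) : ℝ) := by
    exact_mod_cast Nat.one_le_iff_ne_zero.mpr (Nat.factorial_ne_zero _)
  have hfacj : (0:ℝ) < (Nat.factorial j : ℝ) := by exact_mod_cast Nat.factorial_pos j
  have habs : |((-1 : ℝ) ^ j / (Nat.factorial j * Nat.factorial (j + n))) * (x / 2) ^ (2 * j + n)|
      = |x/2| ^ (2*j+n) / (Nat.factorial j * Nat.factorial (j+n)) := by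
    rw [abs_mul, abs_div, abs_pow, abs_neg, abs_one, one_pow, abs_pow]
    rw [abs_mul, Nat.abs_cast, Nat.abs_cast]
    ring
  rw [habs]
  calc |x/2| ^ (2*j+n) / ((Nat.factorial j : ℝ) * Nat.factorial (j+n))
      ≤ y ^ (2*j+n) / ((Nat.factorial j : ℝ) * 1) := by
        gcongr
    _ = y ^ n * ((y^2) ^ j / Nat.factorial j) := by
        rw [pow_add, pow_mul]; ring

lemma besselJnat_lip (n : ℕ) (M : ℝ) (hM : 1 ≤ M) :
    ∃ L, 0 ≤ L ∧ ∀ x y : ℝ, |x| ≤ M → |y| ≤ M →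
      |besselJnat n x - besselJnat n y| ≤ L * |x - y| := by
  set u : ℕ → ℝ := fun j =>
    ((2*j+n : ℕ) : ℝ) * M ^ (2*j+n) / (Nat.factorial j * Nat.factorial (j+n)) with hu_def
  have hu : Summable u := summable_bessel_aux n M hM
  have hM0 : (0:ℝ) ≤ M := le_trans zero_le_one hM
  refine ⟨∑' j, u j, tsum_nonneg (fun j => by positivity), ?_⟩
  intro x y hx hy
  set f : ℕ → ℝ := fun j =>
    ((-1 : ℝ) ^ j / (Nat.factorial j * Nat.factorial (j + n))) * (x / 2) ^ (2 * j + n) with hf_def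
  set g : ℕ → ℝ := fun j =>
    ((-1 : ℝ) ^ j / (Nat.factorial j * Nat.factorial (j + n))) * (y / 2) ^ (2 * j + n) with hg_def
  have hsf : Summable f := besselJnat_term_summable n x
  have hsg : Summable g := besselJnat_term_summable n y
  have hbound : ∀ j, |f j - g j| ≤ u j * |x - y| := by
    intro j
    have hfac : (0:ℝ) < (Nat.factorial j : ℝ) * Nat.factorial (j+n) := by positivity
    have key : f j - g j
        = ((-1 : ℝ) ^ j / (Nat.factorial j * Nat.factorial (j + n)))
          * ((x/2) ^ (2*j+n) - (y/2) ^ (2*j+n)) := by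
      simp only [hf_def, hg_def]; ring
    rw [key, abs_mul]
    have hc : |(-1 : ℝ) ^ j / ((Nat.factorial j : ℝ) * Nat.factorial (j + n))|
        = 1 / ((Nat.factorial j : ℝ) * Nat.factorial (j+n)) := by
      rw [abs_div, abs_pow, abs_neg, abs_one, one_pow, abs_of_pos hfac]
    rw [hc]
    have ha2 : |x/2| ≤ M := by
      rw [abs_div]
      calc |x| / |(2:ℝ)| ≤ |x| := by rw [abs_two]; linarith [abs_nonneg x]
        _ ≤ M := hx
    have hb2 : |y/2| ≤ M := by
      rw [abs_div]
      calc |y| / |(2:ℝ)| ≤ |y| := by rw [abs_two]; linarith [abs_nonneg y]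
        _ ≤ M := hy
    have hpow := abs_pow_sub_pow_le' hM ha2 hb2 (2*j+n)
    have hd : |x/2 - y/2| ≤ |x - y| := by
      have : x/2 - y/2 = (x-y)/2 := by ring
      rw [this, abs_div, abs_two]
      linarith [abs_nonneg (x-y)]
    calc 1 / ((Nat.factorial j : ℝ) * Nat.factorial (j+n)) * |(x/2) ^ (2*j+n) - (y/2) ^ (2*j+n)|
        ≤ 1 / ((Nat.factorial j : ℝ) * Nat.factorial (j+n))
          * (((2*j+n : ℕ):ℝ) * M ^ (2*j+n) * |x/2 - y/2|) := by
          apply mul_le_mul_of_nonneg_left _ (by positivity)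
          exact_mod_cast hpow
      _ ≤ 1 / ((Nat.factorial j : ℝ) * Nat.factorial (j+n))
          * (((2*j+n : ℕ):ℝ) * M ^ (2*j+n) * |x - y|) := by
          apply mul_le_mul_of_nonneg_left _ (by positivity)
          apply mul_le_mul_of_nonneg_left hd (by positivity)
      _ = u j * |x - y| := by simp only [hu_def]; ring
  have habs_sum : Summable (fun j => |f j - g j|) :=
    Summable.of_nonneg_of_le (fun j => abs_nonneg _) hbound (hu.mul_right _)
  have hx' : besselJnat n x = ∑' j, f j := by simp only [hf_def, besselJnat]
  have hy' : besselJnat n y = ∑' j, g j := by simp only [hg_def, besselJnat]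
  have h1 : besselJnat n x - besselJnat n y = ∑' j, (f j - g j) := by
    rw [hx', hy', Summable.tsum_sub hsf hsg]
  rw [h1]
  have habs_sum' : Summable (fun j => ‖f j - g j‖) := by
    simpa only [Real.norm_eq_abs] using habs_sum
  calc |∑' j, (f j - g j)| ≤ ∑' j, |f j - g j| := by
        simpa only [Real.norm_eq_abs] using norm_tsum_le_tsum_norm habs_sum'
    _ ≤ ∑' j, u j * |x - y| := Summable.tsum_le_tsum hbound habs_sum (hu.mul_right _)
    _ = (∑' j, u j) * |x - y| := tsum_mul_right

lemma besselJnat_continuous (n : ℕ) : Continuous (besselJnat n) := by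
  rw [continuous_iff_continuousAt]
  intro x
  obtain ⟨L, hL0, hL⟩ := besselJnat_lip n (|x| + 1) (by linarith [abs_nonneg x])
  apply continuousAt_of_locally_lipschitz zero_lt_one L
  intro y hy
  rw [Real.dist_eq] at hy ⊢
  rw [Real.dist_eq]
  apply hL
  · calc |y| = |x + (y - x)| := by ring_nf
      _ ≤ |x| + |y - x| := abs_add_le _ _
      _ ≤ |x| + 1 := by linarith
  · linarith [abs_nonneg x]

lemma besselJ_lip (p : ℤ) (M : ℝ) (hM : 1 ≤ M) :
    ∃ L, 0 ≤ L ∧ ∀ x y : ℝ, |x| ≤ M → |y| ≤ M →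
      |besselJ p x - besselJ p y| ≤ L * |x - y| := by
  obtain ⟨L, hL0, hL⟩ := besselJnat_lip p.natAbs M hM
  refine ⟨L, hL0, fun x y hx hy => ?_⟩
  unfold besselJ
  split
  · next hp =>
      have : p.toNat = p.natAbs := by omega
      rw [this]; exact hL x y hx hy
  · rw [← mul_sub, abs_mul, abs_pow, abs_neg, abs_one, one_pow, one_mul]
    exact hL x y hx hy

lemma besselJ_continuous (p : ℤ) : Continuous (besselJ p) := by
  unfold besselJ
  split
  · exact besselJnat_continuous _
  · exact continuous_const.mul (besselJnat_continuous _)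
/-- The `p`-th Fourier coefficient `𝔉[h](p) = (1/2π) ∫₀^{2π} h(θ) e^{ipθ} dθ`
of a `2π`-periodic function `h`. -/
noncomputable def fourierCoeff' (h : ℝ → ℝ) (p : ℤ) : ℂ :=
  (1 / (2 * π) : ℂ) * ∫ θ in (0:ℝ)..(2 * π), (h θ : ℂ) * Complex.exp (Complex.I * (p : ℂ) * (θ : ℂ))

set_option maxHeartbeats 2000000 in
/-- First-order expansion of the Born scattering-coefficient integral of a radially
perturbed disk: `G(δ) = G(0) + 2πRδ · J_n(kR)J_m(kR)·𝔉[h](n−m) + O(δ²)`. -/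
theorem scattering_coefficient_expansion (k R : ℝ) (hk : 0 < k) (hR : 0 < R) (n m : ℤ)
    (h : ℝ → ℝ) (hcont : Continuous h) (hper : ∀ θ : ℝ, h (θ + 2 * π) = h θ)
    (G : ℝ → ℂ)
    (hG : ∀ δ : ℝ, G δ = ∫ θ in (0:ℝ)..(2 * π),
        ∫ r in (0:ℝ)..(R + δ * h θ),
          ((besselJ n (k * r) : ℂ) * (besselJ m (k * r) : ℂ)) *
            Complex.exp (Complex.I * ((n : ℂ) - (m : ℂ)) * (θ : ℂ)) * (r : ℂ)) :
    ∃ C > 0, ∃ δ₀ > 0, ∀ δ : ℝ, |δ| ≤ δ₀ →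
      ‖G δ - G 0 - 2 * π * R * δ * ((besselJ n (k * R) : ℂ) * (besselJ m (k * R) : ℂ)) *
          fourierCoeff' h (n - m)‖ ≤ C * δ ^ 2 := by
  have hπ : (0:ℝ) < π := Real.pi_pos
  -- bound on h over [0, 2π]
  obtain ⟨H0, hH0⟩ := (isCompact_Icc (a := (0:ℝ)) (b := 2*π)).exists_bound_of_continuousOn
    hcont.continuousOn
  set Hb : ℝ := max H0 1 with hHb_def
  have hHb1 : (1:ℝ) ≤ Hb := le_max_right _ _
  have hHb0 : (0:ℝ) < Hb := lt_of_lt_of_le zero_lt_one hHb1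
  have hhb : ∀ θ ∈ Set.Icc (0:ℝ) (2*π), |h θ| ≤ Hb := by
    intro θ hθ
    have := hH0 θ hθ
    rw [Real.norm_eq_abs] at this
    exact le_trans this (le_max_left _ _)
  set Mr : ℝ := R + Hb with hMr_def
  have hMr0 : 0 < Mr := by positivity
  set M : ℝ := max (k * Mr) 1 with hM_def
  have hM1 : (1:ℝ) ≤ M := le_max_right _ _
  have hkM : k * Mr ≤ M := le_max_left _ _
  obtain ⟨L1, hL10, hL1⟩ := besselJ_lip n M hM1
  obtain ⟨L2, hL20, hL2⟩ := besselJ_lip m M hM1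
  set A1 : ℝ := L1 * M + |besselJ n 0| with hA1_def
  set A2 : ℝ := L2 * M + |besselJ m 0| with hA2_def
  have hM0 : (0:ℝ) ≤ M := le_trans zero_le_one hM1
  have hA10 : 0 ≤ A1 := add_nonneg (mul_nonneg hL10 hM0) (abs_nonneg _)
  have hA20 : 0 ≤ A2 := add_nonneg (mul_nonneg hL20 hM0) (abs_nonneg _)
  have h0M : |(0:ℝ)| ≤ M := by simpa using le_trans zero_le_one hM1
  have bound1 : ∀ x, |x| ≤ M → |besselJ n x| ≤ A1 := by
    intro x hx
    have hlip := hL1 x 0 hx h0M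
    have h1 : |besselJ n x| ≤ |besselJ n x - besselJ n 0| + |besselJ n 0| := by
      calc |besselJ n x| = |(besselJ n x - besselJ n 0) + besselJ n 0| := by ring_nf
        _ ≤ |besselJ n x - besselJ n 0| + |besselJ n 0| := abs_add_le _ _
    have h2 : |x - 0| ≤ M := by simpa using hx
    have h3 : L1 * |x - 0| ≤ L1 * M := mul_le_mul_of_nonneg_left h2 hL10
    rw [hA1_def]; linarith
  have bound2 : ∀ x, |x| ≤ M → |besselJ m x| ≤ A2 := by
    intro x hx
    have hlip := hL2 x 0 hx h0M
    have h1 : |besselJ m x| ≤ |besselJ m x - besselJ m 0| + |besselJ m 0| := by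
      calc |besselJ m x| = |(besselJ m x - besselJ m 0) + besselJ m 0| := by ring_nf
        _ ≤ |besselJ m x - besselJ m 0| + |besselJ m 0| := abs_add_le _ _
    have h2 : |x - 0| ≤ M := by simpa using hx
    have h3 : L2 * |x - 0| ≤ L2 * M := mul_le_mul_of_nonneg_left h2 hL20
    rw [hA2_def]; linarith
  set LF : ℝ := L1 * k * A2 * Mr + A1 * (L2 * k) * Mr + A1 * A2 with hLF_def
  have hLF0 : 0 ≤ LF := by
    have t1 : 0 ≤ L1 * k * A2 * Mr :=
      mul_nonneg (mul_nonneg (mul_nonneg hL10 hk.le) hA20) hMr0.le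
    have t2 : 0 ≤ A1 * (L2 * k) * Mr :=
      mul_nonneg (mul_nonneg hA10 (mul_nonneg hL20 hk.le)) hMr0.le
    have t3 : 0 ≤ A1 * A2 := mul_nonneg hA10 hA20
    rw [hLF_def]; linarith
  set Freal : ℝ → ℝ := fun r => besselJ n (k*r) * besselJ m (k*r) * r with hF_def
  have hFlip : ∀ r r' : ℝ, |r| ≤ Mr → |r'| ≤ Mr → |Freal r - Freal r'| ≤ LF * |r - r'| := by
    intro r r' hr hr'
    have hkr : |k * r| ≤ M := by
      rw [abs_mul, abs_of_pos hk]
      calc k * |r| ≤ k * Mr := mul_le_mul_of_nonneg_left hr hk.le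
        _ ≤ M := hkM
    have hkr' : |k * r'| ≤ M := by
      rw [abs_mul, abs_of_pos hk]
      calc k * |r'| ≤ k * Mr := mul_le_mul_of_nonneg_left hr' hk.le
        _ ≤ M := hkM
    have e1 : |besselJ n (k*r) - besselJ n (k*r')| ≤ L1 * k * |r - r'| := by
      have := hL1 (k*r) (k*r') hkr hkr'
      have hd : |k*r - k*r'| = k * |r - r'| := by
        rw [← mul_sub, abs_mul, abs_of_pos hk]
      rw [hd] at this
      calc |besselJ n (k*r) - besselJ n (k*r')| ≤ L1 * (k * |r - r'|) := this
        _ = L1 * k * |r - r'| := by ring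
    have e2 : |besselJ m (k*r) - besselJ m (k*r')| ≤ L2 * k * |r - r'| := by
      have := hL2 (k*r) (k*r') hkr hkr'
      have hd : |k*r - k*r'| = k * |r - r'| := by
        rw [← mul_sub, abs_mul, abs_of_pos hk]
      rw [hd] at this
      calc |besselJ m (k*r) - besselJ m (k*r')| ≤ L2 * (k * |r - r'|) := this
        _ = L2 * k * |r - r'| := by ring
    have ha' : |besselJ n (k*r')| ≤ A1 := bound1 _ hkr'
    have hb : |besselJ m (k*r)| ≤ A2 := bound2 _ hkr
    have hb' : |besselJ m (k*r')| ≤ A2 := bound2 _ hkr'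
    have hdec : |Freal r - Freal r'| ≤
        |besselJ n (k*r) - besselJ n (k*r')| * |besselJ m (k*r)| * |r|
        + |besselJ n (k*r')| * |besselJ m (k*r) - besselJ m (k*r')| * |r|
        + |besselJ n (k*r')| * |besselJ m (k*r')| * |r - r'| := by
      have hsplit : Freal r - Freal r'
          = (besselJ n (k*r) - besselJ n (k*r')) * besselJ m (k*r) * r
            + besselJ n (k*r') * (besselJ m (k*r) - besselJ m (k*r')) * r
            + besselJ n (k*r') * besselJ m (k*r') * (r - r') := by
        rw [hF_def]; ring
      rw [hsplit]
      calc |_ + _ + _| ≤ |(besselJ n (k*r) - besselJ n (k*r')) * besselJ m (k*r) * r|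
            + |besselJ n (k*r') * (besselJ m (k*r) - besselJ m (k*r')) * r|
            + |besselJ n (k*r') * besselJ m (k*r') * (r - r')| := abs_add_three _ _ _
        _ = _ := by rw [abs_mul, abs_mul, abs_mul, abs_mul, abs_mul, abs_mul]
    have t1 : |besselJ n (k*r) - besselJ n (k*r')| * |besselJ m (k*r)| * |r|
        ≤ (L1 * k * |r - r'|) * A2 * Mr :=
      mul_le_mul (mul_le_mul e1 hb (abs_nonneg _)
        (mul_nonneg (mul_nonneg hL10 hk.le) (abs_nonneg _))) hr (abs_nonneg _)
        (mul_nonneg (mul_nonneg (mul_nonneg hL10 hk.le) (abs_nonneg _)) hA20)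
    have t2 : |besselJ n (k*r')| * |besselJ m (k*r) - besselJ m (k*r')| * |r|
        ≤ A1 * (L2 * k * |r - r'|) * Mr :=
      mul_le_mul (mul_le_mul ha' e2 (abs_nonneg _) hA10) hr (abs_nonneg _)
        (mul_nonneg hA10 (mul_nonneg (mul_nonneg hL20 hk.le) (abs_nonneg _)))
    have t3 : |besselJ n (k*r')| * |besselJ m (k*r')| * |r - r'|
        ≤ A1 * A2 * |r - r'| :=
      mul_le_mul_of_nonneg_right (mul_le_mul ha' hb' (abs_nonneg _) hA10) (abs_nonneg _)
    have : |Freal r - Freal r'| ≤ (L1 * k * |r - r'|) * A2 * Mr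
        + A1 * (L2 * k * |r - r'|) * Mr + A1 * A2 * |r - r'| := by linarith
    calc |Freal r - Freal r'| ≤ (L1 * k * |r - r'|) * A2 * Mr
          + A1 * (L2 * k * |r - r'|) * Mr + A1 * A2 * |r - r'| := this
      _ = LF * |r - r'| := by rw [hLF_def]; ring
  -- complex-valued integrand machinery
  set Fc : ℝ → ℂ := fun r => ((Freal r : ℝ) : ℂ) with hFc_def
  have hFreal_cont : Continuous Freal := by
    rw [hF_def]
    exact (((besselJ_continuous n).comp (continuous_const.mul continuous_id)).mul
      ((besselJ_continuous m).comp (continuous_const.mul continuous_id))).mul continuous_id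
  have hFc_cont : Continuous Fc := Complex.continuous_ofReal.comp hFreal_cont
  have hFc_int : ∀ a b : ℝ, IntervalIntegrable Fc MeasureTheory.volume a b :=
    fun a b => hFc_cont.intervalIntegrable a b
  set P : ℝ → ℂ := fun a => ∫ r in (0:ℝ)..a, Fc r with hP_def
  have hP_cont : Continuous P := intervalIntegral.continuous_primitive hFc_int 0
  have hEcont : Continuous fun θ : ℝ => Complex.exp (Complex.I * ((n:ℂ) - (m:ℂ)) * (θ:ℂ)) :=
    Complex.continuous_exp.comp (continuous_const.mul Complex.continuous_ofReal)
  have hEnorm : ∀ θ : ℝ, ‖Complex.exp (Complex.I * ((n:ℂ) - (m:ℂ)) * (θ:ℂ))‖ = 1 := by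
    intro θ
    rw [Complex.norm_exp]
    have : (Complex.I * ((n:ℂ) - (m:ℂ)) * (θ:ℂ)).re = 0 := by
      simp [Complex.mul_re, Complex.mul_im]
    rw [this, Real.exp_zero]
  -- rewrite G
  have hGG : ∀ δ : ℝ, G δ = ∫ θ in (0:ℝ)..(2*π),
      Complex.exp (Complex.I * ((n:ℂ) - (m:ℂ)) * (θ:ℂ)) * P (R + δ * h θ) := by
    intro δ
    rw [hG δ]
    apply intervalIntegral.integral_congr
    intro θ _
    simp only [hP_def]
    rw [← intervalIntegral.integral_const_mul]
    apply intervalIntegral.integral_congr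
    intro r _
    simp only [hFc_def, hF_def]
    push_cast
    ring
  have hG0 : G 0 = ∫ θ in (0:ℝ)..(2*π),
      Complex.exp (Complex.I * ((n:ℂ) - (m:ℂ)) * (θ:ℂ)) * P R := by
    rw [hGG 0]
    simp
  -- the linear term as an integral
  have hπC : ((π:ℝ) : ℂ) ≠ 0 := Complex.ofReal_ne_zero.mpr Real.pi_ne_zero
  have hLin : ∀ δ : ℝ,
      2 * (π:ℂ) * (R:ℂ) * (δ:ℂ) * ((besselJ n (k * R) : ℂ) * (besselJ m (k * R) : ℂ)) *
        fourierCoeff' h (n - m)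
      = ∫ θ in (0:ℝ)..(2*π),
          Complex.exp (Complex.I * ((n:ℂ) - (m:ℂ)) * (θ:ℂ)) * (((δ * h θ : ℝ) : ℂ) * Fc R) := by
    intro δ
    have hcast : ((n - m : ℤ) : ℂ) = (n:ℂ) - (m:ℂ) := by push_cast; ring
    rw [fourierCoeff', hcast]
    rw [show (2 * (π:ℂ) * (R:ℂ) * (δ:ℂ) * ((besselJ n (k * R) : ℂ) * (besselJ m (k * R) : ℂ))) *
        ((1 / (2 * (π:ℂ))) * ∫ θ in (0:ℝ)..(2*π), (h θ : ℂ) *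
          Complex.exp (Complex.I * ((n:ℂ) - (m:ℂ)) * (θ:ℂ)))
        = ((δ:ℂ) * Fc R) * ∫ θ in (0:ℝ)..(2*π), (h θ : ℂ) *
          Complex.exp (Complex.I * ((n:ℂ) - (m:ℂ)) * (θ:ℂ)) from by
      have hKc : (2 * (π:ℂ) * (R:ℂ) * (δ:ℂ) *
          ((besselJ n (k * R) : ℂ) * (besselJ m (k * R) : ℂ))) * (1 / (2 * (π:ℂ)))
          = (δ:ℂ) * Fc R := by
        simp only [hFc_def, hF_def]
        push_cast
        field_simp
      calc _ = ((2 * (π:ℂ) * (R:ℂ) * (δ:ℂ) *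
            ((besselJ n (k * R) : ℂ) * (besselJ m (k * R) : ℂ))) * (1 / (2 * (π:ℂ)))) *
            ∫ θ in (0:ℝ)..(2*π), (h θ : ℂ) *
              Complex.exp (Complex.I * ((n:ℂ) - (m:ℂ)) * (θ:ℂ)) := by ring
        _ = _ := by rw [hKc]]
    rw [← intervalIntegral.integral_const_mul]
    apply intervalIntegral.integral_congr
    intro θ _
    push_cast
    ring
  -- choose constants
  refine ⟨2 * π * (LF * Hb ^ 2) + 1, by positivity, 1, one_pos, ?_⟩
  intro δ hδ
  -- integrability of the three pieces
  have hf1 : IntervalIntegrable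
      (fun θ : ℝ => Complex.exp (Complex.I * ((n:ℂ) - (m:ℂ)) * (θ:ℂ)) * P (R + δ * h θ))
      MeasureTheory.volume 0 (2*π) :=
    (hEcont.mul (hP_cont.comp (continuous_const.add (continuous_const.mul hcont)))).intervalIntegrable _ _
  have hf2 : IntervalIntegrable
      (fun θ : ℝ => Complex.exp (Complex.I * ((n:ℂ) - (m:ℂ)) * (θ:ℂ)) * P R)
      MeasureTheory.volume 0 (2*π) :=
    (hEcont.mul continuous_const).intervalIntegrable _ _
  have hf3 : IntervalIntegrable
      (fun θ : ℝ => Complex.exp (Complex.I * ((n:ℂ) - (m:ℂ)) * (θ:ℂ)) * (((δ * h θ : ℝ) : ℂ) * Fc R))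
      MeasureTheory.volume 0 (2*π) :=
    (hEcont.mul ((Complex.continuous_ofReal.comp
      (continuous_const.mul hcont)).mul continuous_const)).intervalIntegrable _ _
  have hkey : G δ - G 0 - 2 * π * R * δ *
        ((besselJ n (k * R) : ℂ) * (besselJ m (k * R) : ℂ)) * fourierCoeff' h (n - m)
      = ∫ θ in (0:ℝ)..(2*π), Complex.exp (Complex.I * ((n:ℂ) - (m:ℂ)) * (θ:ℂ)) *
          (P (R + δ * h θ) - P R - ((δ * h θ : ℝ) : ℂ) * Fc R) := by
    rw [hGG δ, hG0, hLin δ, ← intervalIntegral.integral_sub hf1 hf2,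
      ← intervalIntegral.integral_sub (hf1.sub hf2) hf3]
    apply intervalIntegral.integral_congr
    intro θ _
    simp only
    ring
  rw [hkey]
  have hbound : ∀ θ ∈ Set.uIoc (0:ℝ) (2*π),
      ‖Complex.exp (Complex.I * ((n:ℂ) - (m:ℂ)) * (θ:ℂ)) *
        (P (R + δ * h θ) - P R - ((δ * h θ : ℝ) : ℂ) * Fc R)‖ ≤ LF * Hb ^ 2 * δ ^ 2 := by
    intro θ hθ
    have hθI : θ ∈ Set.Icc (0:ℝ) (2*π) := by
      rcases Set.mem_uIoc.mp hθ with ⟨h1, h2⟩ | ⟨h1, h2⟩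
      · exact ⟨h1.le, h2⟩
      · exfalso; linarith
    have hhθ : |h θ| ≤ Hb := hhb θ hθI
    set s : ℝ := δ * h θ with hs_def
    have hsabs : |s| ≤ |δ| * Hb := by
      rw [hs_def, abs_mul]
      exact mul_le_mul_of_nonneg_left hhθ (abs_nonneg _)
    have hsHb : |s| ≤ Hb := le_trans hsabs (by nlinarith [abs_nonneg δ])
    rw [norm_mul, hEnorm, one_mul]
    have i1 : P (R + s) - P R = ∫ r in R..(R + s), Fc r := by
      simp only [hP_def]
      exact intervalIntegral.integral_interval_sub_left (hFc_int 0 (R+s)) (hFc_int 0 R)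
    have i2 : ((s:ℝ):ℂ) * Fc R = ∫ r in R..(R + s), Fc R := by
      rw [intervalIntegral.integral_const, add_sub_cancel_left, Complex.real_smul]
    have i3 : P (R + s) - P R - ((s:ℝ):ℂ) * Fc R = ∫ r in R..(R + s), (Fc r - Fc R) := by
      rw [i1, i2, ← intervalIntegral.integral_sub (hFc_int R (R+s)) intervalIntegrable_const]
    rw [i3]
    have hstep : ∀ r ∈ Set.uIoc R (R + s), ‖Fc r - Fc R‖ ≤ LF * |s| := by
      intro r hr
      have hrb : R - |s| ≤ r ∧ r ≤ R + |s| := by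
        rcases Set.mem_uIoc.mp hr with ⟨h1, h2⟩ | ⟨h1, h2⟩
        · constructor <;> [linarith [abs_nonneg s]; linarith [le_abs_self s]]
        · constructor <;> [linarith [neg_abs_le s]; linarith [abs_nonneg s]]
      have hrMr : |r| ≤ Mr := by
        rw [abs_le, hMr_def]
        constructor <;> [nlinarith [hrb.1, hsHb]; nlinarith [hrb.2, hsHb]]
      have hRMr : |R| ≤ Mr := by
        rw [abs_of_pos hR, hMr_def]; linarith
      have hrR : |r - R| ≤ |s| := by
        rw [abs_le]; constructor <;> [linarith [hrb.1]; linarith [hrb.2]]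
      have : ‖Fc r - Fc R‖ = |Freal r - Freal R| := by
        simp only [hFc_def]
        rw [← Complex.ofReal_sub, Complex.norm_real, Real.norm_eq_abs]
      rw [this]
      calc |Freal r - Freal R| ≤ LF * |r - R| := hFlip r R hrMr hRMr
        _ ≤ LF * |s| := mul_le_mul_of_nonneg_left hrR hLF0
    calc ‖∫ r in R..(R + s), (Fc r - Fc R)‖ ≤ LF * |s| * |R + s - R| :=
          intervalIntegral.norm_integral_le_of_norm_le_const hstep
      _ = LF * (|s| * |s|) := by rw [add_sub_cancel_left]; ring
      _ = LF * s ^ 2 := by rw [abs_mul_abs_self]; ring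
      _ ≤ LF * Hb ^ 2 * δ ^ 2 := by
          have h1 : s ^ 2 ≤ (|δ| * Hb) ^ 2 := by
            rw [← sq_abs s]
            exact pow_le_pow_left₀ (abs_nonneg _) hsabs 2
          have h2 : (|δ| * Hb) ^ 2 = δ ^ 2 * Hb ^ 2 := by
            rw [mul_pow, sq_abs]
          nlinarith [hLF0]
  calc ‖∫ θ in (0:ℝ)..(2*π), Complex.exp (Complex.I * ((n:ℂ) - (m:ℂ)) * (θ:ℂ)) *
        (P (R + δ * h θ) - P R - ((δ * h θ : ℝ) : ℂ) * Fc R)‖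
      ≤ LF * Hb ^ 2 * δ ^ 2 * |2*π - 0| :=
        intervalIntegral.norm_integral_le_of_norm_le_const hbound
    _ = 2 * π * (LF * Hb ^ 2) * δ ^ 2 := by
        rw [sub_zero, abs_of_pos (by positivity)]; ring
    _ ≤ (2 * π * (LF * Hb ^ 2) + 1) * δ ^ 2 := by nlinarith [sq_nonneg δ]
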